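/- Let r : Fin n → Fin n → ZMod 2 be such that each row j ≠ j_a is uniformly distributed over the affine subspace {v : Σ_k v_k = 0}, independently across rows, and row j_a is fixed with Σ_k r_{j_a,k} = c. Then for any k, the column sums z_k = Σ_j r_{j,k}, conditioned on their total Σ_k z_k = c, are uniformly distributed over {z : Σ_k z_k = c}; in particular the joint distribution of (z_1,…,z_n) is independent of the identity j_a of Alice's row. -/

import Mathlib

open Finset

private lemma notif_aux (n : ℕ) (hn : 2 ≤ n) (c : ZMod 2)
    (ja ja' : Fin n) (a a' : Fin n → ZMod 2)
    (ha : (∑ k, a k) = c) (ha' : (∑ k, a' k) = c)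
    (z z' : Fin n → ZMod 2) (hz : (∑ k, z k) = c) (hz' : (∑ k, z' k) = c) :
    ((univ : Finset (Fin n → Fin n → ZMod 2)).filter
        (fun r => r ja = a ∧ (∀ j, j ≠ ja → (∑ k, r j k) = 0) ∧ ∀ k, (∑ j, r j k) = z k)).card
      ≤
    ((univ : Finset (Fin n → Fin n → ZMod 2)).filter
        (fun r => r ja' = a' ∧ (∀ j, j ≠ ja' → (∑ k, r j k) = 0) ∧ ∀ k, (∑ j, r j k) = z' k)).card := by
  haveI : Nontrivial (Fin n) := Fin.nontrivial_iff_two_le.mpr hn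
  obtain ⟨j0, hj0⟩ := exists_ne ja'
  set σ : Equiv.Perm (Fin n) := Equiv.swap ja ja' with hσ
  set w : Fin n → ZMod 2 := fun k => z' k - z k + a k - a' k with hw
  have hwsum : ∑ k, w k = 0 := by
    have : ∑ k, w k = (∑ k, z' k) - (∑ k, z k) + (∑ k, a k) - (∑ k, a' k) := by
      simp only [hw]
      rw [Finset.sum_sub_distrib, Finset.sum_add_distrib, Finset.sum_sub_distrib]
    rw [this, hz, hz', ha, ha']; ring
  set Φ : (Fin n → Fin n → ZMod 2) → (Fin n → Fin n → ZMod 2) :=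
    fun r j k => if j = ja' then a' k else if j = j0 then r (σ j) k + w k else r (σ j) k with hΦ
  have hσja' : σ ja' = ja := Equiv.swap_apply_right ja ja'
  have hσja : σ ja = ja' := Equiv.swap_apply_left ja ja'
  apply Finset.card_le_card_of_injOn Φ
  · intro r hr
    simp only [mem_coe, mem_filter, mem_univ, true_and] at hr ⊢
    obtain ⟨h1, h2, h3⟩ := hr
    have hσne : ∀ j, j ≠ ja' → σ j ≠ ja := by
      intro j hj hc
      exact hj (σ.injective (hc.trans hσja'.symm))
    refine ⟨?_, ?_, ?_⟩
    · funext k; simp [hΦ]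
    · intro j hj
      simp only [hΦ, if_neg hj]
      by_cases hjj : j = j0
      · simp only [if_pos hjj]
        rw [Finset.sum_add_distrib, h2 _ (hσne j hj), hwsum, add_zero]
      · simp only [if_neg hjj]
        exact h2 _ (hσne j hj)
    · intro k
      have key : ∀ j, Φ r j k =
          (if j = ja' then a' k - r (σ j) k else 0) + (if j = j0 then w k else 0)
            + r (σ j) k := by
        intro j
        simp only [hΦ]
        split_ifs with hA hB hB
        · exact absurd (hB.symm.trans hA) hj0
        · ring
        · ring
        · ring
      rw [Finset.sum_congr rfl (fun j _ => key j)]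
      rw [Finset.sum_add_distrib, Finset.sum_add_distrib]
      rw [Finset.sum_ite_eq' univ ja', Finset.sum_ite_eq' univ j0]
      have hcomp : ∑ j, r (σ j) k = ∑ j, r j k := Equiv.sum_comp σ (fun j => r j k)
      rw [hcomp, h3 k]
      rw [if_pos (mem_univ ja'), if_pos (mem_univ j0), hσja', h1]
      show a' k - a k + (z' k - z k + a k - a' k) + z k = z' k
      ring
  · intro r1 h1 r2 h2 heq
    simp only [coe_filter, Set.mem_setOf_eq, mem_univ, true_and] at h1 h2
    funext j k
    by_cases hj : j = ja
    · subst hj; rw [h1.1, h2.1]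
    · have hi : σ j ≠ ja' := fun hc => hj (σ.injective (hc.trans hσja.symm))
      have h := congrFun (congrFun heq (σ j)) k
      simp only [hΦ, if_neg hi] at h
      have hσσ : σ (σ j) = j := Equiv.swap_apply_self ja ja' j
      rw [hσσ] at h
      by_cases hjj : σ j = j0
      · simp only [if_pos hjj] at h; exact add_right_cancel h
      · simpa [if_neg hjj] using h

/-- Anonymity of the Notification protocol: rows j ≠ j_a are uniform over the parity-0 affine
subspace (independently), and Alice's row j_a is a fixed vector a with parity c.  Counting the
equally-likely tables r that are compatible with this description, the column-sum vector
z_k = Σ_j r_{j,k} is uniform over {z : Σ_k z_k = c}: every such z arises from the same number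
of tables, and this number does not depend on the identity j_a of Alice's row nor on her fixed
row a.  In particular the joint distribution of (z_1,…,z_n) is independent of j_a. -/
theorem notification_anonymity (n : ℕ) (hn : 2 ≤ n) (c : ZMod 2)
    (ja ja' : Fin n) (a a' : Fin n → ZMod 2)
    (ha : (∑ k, a k) = c) (ha' : (∑ k, a' k) = c)
    (z z' : Fin n → ZMod 2) (hz : (∑ k, z k) = c) (hz' : (∑ k, z' k) = c) :
    ((univ : Finset (Fin n → Fin n → ZMod 2)).filter
        (fun r => r ja = a ∧ (∀ j, j ≠ ja → (∑ k, r j k) = 0) ∧ ∀ k, (∑ j, r j k) = z k)).card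
      =
    ((univ : Finset (Fin n → Fin n → ZMod 2)).filter
        (fun r => r ja' = a' ∧ (∀ j, j ≠ ja' → (∑ k, r j k) = 0) ∧ ∀ k, (∑ j, r j k) = z' k)).card := by
  exact le_antisymm (notif_aux n hn c ja ja' a a' ha ha' z z' hz hz')
    (notif_aux n hn c ja' ja a' a ha' ha z' z hz' hz)
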